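/- The pivots of the Neville elimination of L^{(q,α)} are p_{1,1} = 1 and p_{i,i} = q^{binom(i-1,2)} for 2 ≤ i ≤ n+1; equivalently, the determinant of L^{(q,α)} equals q^{∑_{i=1}^{n} binom(i,2)} = q^{binom(n+1,3)}. -/

import Mathlib

open Finset Matrix

noncomputable def qInt (q : ℝ) (m : ℕ) : ℝ := ∑ i ∈ Finset.range m, q ^ i

noncomputable def qFact (q : ℝ) (m : ℕ) : ℝ := ∏ i ∈ Finset.range m, qInt q (i + 1)

noncomputable def qBinom (q : ℝ) (m k : ℕ) : ℝ :=
  if k ≤ m then qFact q m / (qFact q k * qFact q (m - k)) else 0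

noncomputable def Lmat (q α : ℝ) (n : ℕ) : Matrix (Fin (n + 1)) (Fin (n + 1)) ℝ :=
  Matrix.of fun i j =>
    if j.1 = 0 then (if i.1 = 0 then 1 else 0)
    else if j.1 ≤ i.1 then
      (-α * qInt q i.1) ^ (i.1 - j.1) * q ^ (j.1.choose 2) * qBinom q (i.1 - 1) (i.1 - j.1)
    else 0

noncomputable def nevilleStep (n k : ℕ) (B : Matrix (Fin (n + 1)) (Fin (n + 1)) ℝ) :
    Matrix (Fin (n + 1)) (Fin (n + 1)) ℝ :=
  Matrix.of fun i j =>
    let r : Fin (n + 1) := ⟨i.1 - 1, Nat.lt_of_le_of_lt (Nat.sub_le _ _) i.2⟩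
    let c : Fin (n + 1) := ⟨min (k - 1) n, Nat.lt_succ_of_le (min_le_right _ _)⟩
    if 1 ≤ k ∧ k ≤ i.1 ∧ k ≤ j.1 ∧ B r c ≠ 0 then
      B i j - (B i c / B r c) * B r j
    else B i j

/-- `nevilleIter n A k` is the matrix `A^{(k)}` of the Neville elimination of `A`
(with `A^{(1)} = A`, and `A^{(0)} = A` by convention). -/
noncomputable def nevilleIter (n : ℕ) (A : Matrix (Fin (n + 1)) (Fin (n + 1)) ℝ) :
    ℕ → Matrix (Fin (n + 1)) (Fin (n + 1)) ℝ
  | 0 => A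
  | k + 1 => nevilleStep n k (nevilleIter n A k)

lemma qInt_pos {q : ℝ} (hq : 0 < q) {m : ℕ} (hm : 0 < m) : 0 < qInt q m :=
  Finset.sum_pos (fun i _ => pow_pos hq i) (Finset.nonempty_range_iff.mpr hm.ne')

lemma qFact_pos {q : ℝ} (hq : 0 < q) (m : ℕ) : 0 < qFact q m :=
  Finset.prod_pos fun i _ => qInt_pos hq (Nat.succ_pos i)

lemma qBinom_zero {q : ℝ} (hq : 0 < q) (m : ℕ) : qBinom q m 0 = 1 := by
  have h0 : qFact q 0 = 1 := by simp [qFact]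
  simp [qBinom, h0, div_self (qFact_pos hq m).ne']

lemma Lmat_diag (q α : ℝ) (hq : 0 < q) (n : ℕ) (i : Fin (n + 1)) :
    Lmat q α n i i = q ^ (i.1.choose 2) := by
  unfold Lmat
  simp only [Matrix.of_apply]
  by_cases h : i.1 = 0
  · simp [h]
  · rw [if_neg h, if_pos le_rfl, Nat.sub_self, qBinom_zero hq]
    ring

lemma Lmat_tri (q α : ℝ) (n : ℕ) (i j : Fin (n + 1)) (hij : i.1 < j.1) :
    Lmat q α n i j = 0 := by
  unfold Lmat
  simp only [Matrix.of_apply]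
  rw [if_neg (by omega), if_neg (by omega)]

lemma nevilleIter_tri_diag (n : ℕ) (A : Matrix (Fin (n + 1)) (Fin (n + 1)) ℝ)
    (hA : ∀ i j : Fin (n + 1), i.1 < j.1 → A i j = 0) (k : ℕ) :
    (∀ i j : Fin (n + 1), i.1 < j.1 → nevilleIter n A k i j = 0) ∧
    (∀ i : Fin (n + 1), nevilleIter n A k i i = A i i) := by
  induction k with
  | zero => exact ⟨hA, fun i => rfl⟩
  | succ k ih =>
    have step : ∀ i j : Fin (n + 1),
        nevilleIter n A (k + 1) i j = nevilleStep n k (nevilleIter n A k) i j :=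
      fun i j => rfl
    constructor
    · intro i j hij
      rw [step]
      unfold nevilleStep
      simp only [Matrix.of_apply]
      set B := nevilleIter n A k
      split_ifs with h
      · have h1 : B i j = 0 := ih.1 i j hij
        have h2 : B ⟨i.1 - 1, Nat.lt_of_le_of_lt (Nat.sub_le _ _) i.2⟩ j = 0 :=
          ih.1 _ j (by simpa using Nat.lt_of_le_of_lt (Nat.sub_le i.1 1) hij)
        rw [h1, h2]; ring
      · exact ih.1 i j hij
    · intro i
      rw [step]
      unfold nevilleStep
      simp only [Matrix.of_apply]
      set B := nevilleIter n A k
      split_ifs with h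
      · have hi1 : 1 ≤ i.1 := le_trans h.1 h.2.1
        have h2 : B ⟨i.1 - 1, Nat.lt_of_le_of_lt (Nat.sub_le _ _) i.2⟩ i = 0 :=
          ih.1 _ i (by show i.1 - 1 < i.1; omega)
        rw [h2]
        simpa using ih.2 i
      · exact ih.2 i

lemma sum_choose_two : ∀ n : ℕ, ∑ m ∈ Finset.range n, m.choose 2 = n.choose 3 := by
  intro n
  induction n with
  | zero => simp
  | succ n ih =>
    rw [Finset.sum_range_succ, ih, Nat.choose_succ_succ' n 2, Nat.add_comm]

theorem neville_Lmat_pivots_and_det (q α : ℝ) (hq : 0 < q) (n : ℕ) :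
    (∀ i : ℕ, ∀ hi : 1 ≤ i, ∀ hin : i ≤ n + 1,
      nevilleIter n (Lmat q α n) i ⟨i - 1, by omega⟩ ⟨i - 1, by omega⟩ =
        q ^ ((i - 1).choose 2)) ∧
    (Lmat q α n).det = q ^ ((n + 1).choose 3) := by
  have key := fun k => nevilleIter_tri_diag n (Lmat q α n) (Lmat_tri q α n) k
  constructor
  · intro i hi hin
    rw [(key i).2 ⟨i - 1, by omega⟩, Lmat_diag q α hq n]
  · rw [Matrix.det_of_lowerTriangular (Lmat q α n)
      (fun i j hij => Lmat_tri q α n i j hij)]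
    have : ∀ i : Fin (n + 1), Lmat q α n i i = q ^ (i.1.choose 2) := Lmat_diag q α hq n
    simp_rw [this]
    rw [Finset.prod_pow_eq_pow_sum]
    congr 1
    rw [← sum_choose_two (n + 1), ← Fin.sum_univ_eq_sum_range]
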